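/- Let K be a field of characteristic p > 0 and let A_n be the n-th Weyl algebra over K, with centre Z_n = K[X_1, …, X_{2n}] where X_i = x_i^p. Then the restriction map res_n : Aut_K(A_n) → Aut_K(Z_n), σ ↦ σ|_{Z_n}, is an injective group homomorphism. -/

import Mathlib

/-!
STATEMENT 17: Let `K` be a field of characteristic `p > 0` and `A_n` the `n`-th Weyl
algebra over `K`, with centre `Z_n`.  The restriction map
`res_n : Aut_K(A_n) → Aut_K(Z_n)`, `σ ↦ σ|_{Z_n}`, is an injective group homomorphism.

Here `res` is given as data together with the characterising property
`res σ z = σ z` for `z ∈ Z_n` (every automorphism maps the centre to itself), and the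
conclusion asserts that it is multiplicative and injective.
-/

noncomputable section

/-- The defining relations of the `n`-th Weyl algebra: the `x_i` (indexed by `Sum.inl`)
commute, the `∂_i` (indexed by `Sum.inr`) commute, and `∂_i x_j = x_j ∂_i + δ_{ij}`. -/
inductive WeylRelN (K : Type*) [CommRing K] (n : ℕ) :
    FreeAlgebra K (Fin n ⊕ Fin n) → FreeAlgebra K (Fin n ⊕ Fin n) → Prop
  | xx (i j : Fin n) : WeylRelN K n
      (FreeAlgebra.ι K (Sum.inl i) * FreeAlgebra.ι K (Sum.inl j))
      (FreeAlgebra.ι K (Sum.inl j) * FreeAlgebra.ι K (Sum.inl i))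
  | dd (i j : Fin n) : WeylRelN K n
      (FreeAlgebra.ι K (Sum.inr i) * FreeAlgebra.ι K (Sum.inr j))
      (FreeAlgebra.ι K (Sum.inr j) * FreeAlgebra.ι K (Sum.inr i))
  | dx_ne (i j : Fin n) (h : i ≠ j) : WeylRelN K n
      (FreeAlgebra.ι K (Sum.inr i) * FreeAlgebra.ι K (Sum.inl j))
      (FreeAlgebra.ι K (Sum.inl j) * FreeAlgebra.ι K (Sum.inr i))
  | dx (i : Fin n) : WeylRelN K n
      (FreeAlgebra.ι K (Sum.inr i) * FreeAlgebra.ι K (Sum.inl i))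
      (FreeAlgebra.ι K (Sum.inl i) * FreeAlgebra.ι K (Sum.inr i) + 1)

/-- The `n`-th Weyl algebra `A_n(K)`. -/
abbrev WeylN (K : Type*) [CommRing K] (n : ℕ) := RingQuot (WeylRelN K n)

namespace Weyl17

variable (K : Type*) [Field K] (n : ℕ)

/-- the generators of the Weyl algebra -/
def gen (s : Fin n ⊕ Fin n) : WeylN K n :=
  RingQuot.mkAlgHom K (WeylRelN K n) (FreeAlgebra.ι K s)

def xg (i : Fin n) : WeylN K n := gen K n (Sum.inl i)
def dg (i : Fin n) : WeylN K n := gen K n (Sum.inr i)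

variable {K n}

lemma rel_xx (i j : Fin n) : xg K n i * xg K n j = xg K n j * xg K n i := by
  have := RingQuot.mkAlgHom_rel K (WeylRelN.xx (K := K) (n := n) i j)
  simpa [xg, gen, map_mul] using this

lemma rel_dd (i j : Fin n) : dg K n i * dg K n j = dg K n j * dg K n i := by
  have := RingQuot.mkAlgHom_rel K (WeylRelN.dd (K := K) (n := n) i j)
  simpa [dg, gen, map_mul] using this

lemma rel_dx (i j : Fin n) :
    dg K n i * xg K n j = xg K n j * dg K n i + if j = i then 1 else 0 := by
  by_cases h : j = i
  · subst h
    have := RingQuot.mkAlgHom_rel K (WeylRelN.dx (K := K) (n := n) j)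
    simpa [dg, xg, gen, map_mul, map_add, map_one] using this
  · have := RingQuot.mkAlgHom_rel K (WeylRelN.dx_ne (K := K) (n := n) i j (fun hh => h hh.symm))
    simp only [dg, xg, gen, if_neg h, add_zero]
    simpa [map_mul] using this

lemma adjoin_gen_top : Algebra.adjoin K (Set.range (gen K n)) = ⊤ := by
  have hsurj : (RingQuot.mkAlgHom K (WeylRelN K n)).range = ⊤ := by
    rw [AlgHom.range_eq_top]
    exact RingQuot.mkAlgHom_surjective K _
  have h1 : Subalgebra.map (RingQuot.mkAlgHom K (WeylRelN K n))
      (Algebra.adjoin K (Set.range (FreeAlgebra.ι K (X := Fin n ⊕ Fin n)))) = ⊤ := by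
    rw [FreeAlgebra.adjoin_range_ι, Algebra.map_top, hsurj]
  rw [AlgHom.map_adjoin] at h1
  rw [← h1, ← Set.range_comp]
  rfl

open MvPolynomial

variable (K n) in
instance CxComm : CommSemiring (Algebra.adjoin K (Set.range (xg K n))) :=
  Algebra.adjoinCommSemiringOfComm K (by
    rintro a ⟨i, rfl⟩ b ⟨j, rfl⟩; exact rel_xx i j)

variable (K n) in
instance CdComm : CommSemiring (Algebra.adjoin K (Set.range (dg K n))) :=
  Algebra.adjoinCommSemiringOfComm K (by
    rintro a ⟨i, rfl⟩ b ⟨j, rfl⟩; exact rel_dd i j)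

variable (K n)

def Xmap : MvPolynomial (Fin n) K →ₐ[K] WeylN K n :=
  (Algebra.adjoin K (Set.range (xg K n))).val.comp (MvPolynomial.aeval (R := K)
    (fun i => (⟨xg K n i, Algebra.subset_adjoin ⟨i, rfl⟩⟩ :
      Algebra.adjoin K (Set.range (xg K n)))))

def Dmap : MvPolynomial (Fin n) K →ₐ[K] WeylN K n :=
  (Algebra.adjoin K (Set.range (dg K n))).val.comp (MvPolynomial.aeval (R := K)
    (fun i => (⟨dg K n i, Algebra.subset_adjoin ⟨i, rfl⟩⟩ :
      Algebra.adjoin K (Set.range (dg K n)))))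

variable {K n}

lemma Xmap_X (i : Fin n) : Xmap K n (X i) = xg K n i := by simp [Xmap]
lemma Dmap_X (i : Fin n) : Dmap K n (X i) = dg K n i := by simp [Dmap]

variable (K n) in
/-- ordered monomials -/
def mono (α β : Fin n →₀ ℕ) : WeylN K n :=
  Xmap K n (monomial α 1) * Dmap K n (monomial β 1)

/-- the weight of an exponent vector -/
def wt {ι : Type*} (α : ι →₀ ℕ) : ℕ := α.sum fun _ k => k

lemma wt_add {ι : Type*} (α β : ι →₀ ℕ) : wt (α + β) = wt α + wt β :=
  Finsupp.sum_add_index' (fun _ => rfl) (fun _ _ _ => rfl)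

lemma wt_single {ι : Type*} (i : ι) (k : ℕ) : wt (Finsupp.single i k) = k := by
  simp [wt, Finsupp.sum_single_index]

lemma wt_eq_zero {ι : Type*} {α : ι →₀ ℕ} (h : wt α = 0) : α = 0 := by
  rw [wt, Finsupp.sum] at h
  ext a
  simp only [Finsupp.coe_zero, Pi.zero_apply]
  by_cases ha : a ∈ α.support
  · exact Finset.sum_eq_zero_iff.mp h a ha
  · exact Finsupp.notMem_support_iff.mp ha

/-- decomposition of a nonzero exponent vector -/
lemma exists_single_add {ι : Type*} {γ : ι →₀ ℕ} (h : γ ≠ 0) :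
    ∃ i γ', γ = Finsupp.single i 1 + γ' ∧ wt γ = wt γ' + 1 := by
  obtain ⟨i, hi⟩ := Finsupp.ne_iff.mp h
  simp only [Finsupp.coe_zero, Pi.zero_apply] at hi
  have key : γ = Finsupp.single i 1 + (γ - Finsupp.single i 1) := by
    ext a
    by_cases hai : a = i
    · subst hai
      simp only [Finsupp.coe_add, Finsupp.coe_tsub, Pi.add_apply, Pi.sub_apply,
        Finsupp.single_eq_same]
      omega
    · simp only [Finsupp.coe_add, Finsupp.coe_tsub, Pi.add_apply, Pi.sub_apply,
        Finsupp.single_eq_of_ne' (Ne.symm hai)]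
      omega
  refine ⟨i, γ - Finsupp.single i 1, key, ?_⟩
  conv_lhs => rw [key]
  rw [wt_add, wt_single]
  omega

lemma wt_eq_one {ι : Type*} {α : ι →₀ ℕ} (h : wt α = 1) :
    ∃ i, α = Finsupp.single i 1 := by
  have hne : α ≠ 0 := by rintro rfl; simp [wt] at h
  obtain ⟨i, γ', hdec, hwt⟩ := exists_single_add hne
  have : wt γ' = 0 := by omega
  rw [wt_eq_zero this, add_zero] at hdec
  exact ⟨i, hdec⟩

lemma Xmono_add (α β : Fin n →₀ ℕ) :
    Xmap K n (monomial (α + β) 1) = Xmap K n (monomial α 1) * Xmap K n (monomial β 1) := by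
  rw [← map_mul, monomial_mul, one_mul]

lemma Dmono_add (α β : Fin n →₀ ℕ) :
    Dmap K n (monomial (α + β) 1) = Dmap K n (monomial α 1) * Dmap K n (monomial β 1) := by
  rw [← map_mul, monomial_mul, one_mul]

lemma Xmono_single (i : Fin n) (k : ℕ) :
    Xmap K n (monomial (Finsupp.single i k) 1) = xg K n i ^ k := by
  rw [← X_pow_eq_monomial, map_pow, Xmap_X]

lemma Dmono_single (i : Fin n) (k : ℕ) :
    Dmap K n (monomial (Finsupp.single i k) 1) = dg K n i ^ k := by
  rw [← X_pow_eq_monomial, map_pow, Dmap_X]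

lemma mono_zero_zero : mono K n 0 0 = 1 := by
  simp [mono, monomial_zero']

lemma mono_mul_mono_right (α β δ : Fin n →₀ ℕ) :
    mono K n α β * mono K n 0 δ = mono K n α (β + δ) := by
  simp only [mono, monomial_zero', map_one, one_mul, Dmono_add, map_C, map_one]
  rw [mul_assoc]

lemma mono_left_mul (α γ δ : Fin n →₀ ℕ) :
    mono K n α 0 * mono K n γ δ = mono K n (α + γ) δ := by
  simp only [mono, monomial_zero', map_one, mul_one, Xmono_add]
  rw [mul_assoc]

lemma xg_mul_mono (i : Fin n) (α β : Fin n →₀ ℕ) :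
    xg K n i * mono K n α β = mono K n (Finsupp.single i 1 + α) β := by
  rw [mono, mono, Xmono_add, Xmono_single, pow_one, mul_assoc]


variable (K n) in
/-- the Bernstein filtration, as spans of monomials -/
def F (d : ℕ) : Submodule K (WeylN K n) :=
  Submodule.span K {a | ∃ α β, wt α + wt β ≤ d ∧ a = mono K n α β}

lemma F_mono {d e : ℕ} (h : d ≤ e) : F K n d ≤ F K n e := by
  apply Submodule.span_mono
  rintro a ⟨α, β, hw, rfl⟩
  exact ⟨α, β, hw.trans h, rfl⟩

lemma mono_mem_F {α β : Fin n →₀ ℕ} {d : ℕ} (h : wt α + wt β ≤ d) :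
    mono K n α β ∈ F K n d :=
  Submodule.subset_span ⟨α, β, h, rfl⟩

lemma one_mem_F (d : ℕ) : (1 : WeylN K n) ∈ F K n d := by
  rw [← mono_zero_zero]
  exact mono_mem_F (by simp [wt])

lemma xg_eq_mono (i : Fin n) : xg K n i = mono K n (Finsupp.single i 1) 0 := by
  rw [mono, Xmono_single, pow_one]
  simp

lemma dg_eq_mono (i : Fin n) : dg K n i = mono K n 0 (Finsupp.single i 1) := by
  rw [mono, Dmono_single, pow_one]
  simp

lemma xg_mul_F {i : Fin n} {e : ℕ} {c : WeylN K n} (hc : c ∈ F K n e) :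
    xg K n i * c ∈ F K n (e + 1) := by
  have h : F K n e ≤ Submodule.comap (LinearMap.mulLeft K (xg K n i)) (F K n (e + 1)) := by
    rw [F, Submodule.span_le]
    rintro a ⟨α, β, hw, rfl⟩
    simp only [SetLike.mem_coe, Submodule.mem_comap, LinearMap.mulLeft_apply]
    rw [xg_mul_mono]
    exact mono_mem_F (by rw [wt_add, wt_single]; omega)
  exact h hc

lemma F_mul_Dmono {δ : Fin n →₀ ℕ} {e : ℕ} {c : WeylN K n} (hc : c ∈ F K n e) :
    c * mono K n 0 δ ∈ F K n (e + wt δ) := by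
  have h : F K n e ≤ Submodule.comap (LinearMap.mulRight K (mono K n 0 δ)) (F K n (e + wt δ)) := by
    rw [F, Submodule.span_le]
    rintro a ⟨α, β, hw, rfl⟩
    simp only [SetLike.mem_coe, Submodule.mem_comap, LinearMap.mulRight_apply]
    rw [mono_mul_mono_right]
    exact mono_mem_F (by rw [wt_add]; omega)
  exact h hc

/-- commuting a `∂` past a monomial in the `x`'s -/
lemma dg_Xmono (j : Fin n) (γ : Fin n →₀ ℕ) :
    ∃ c, dg K n j * Xmap K n (monomial γ 1) = Xmap K n (monomial γ 1) * dg K n j + c ∧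
      ∀ m, wt γ ≤ m + 1 → c ∈ F K n m := by
  suffices h : ∀ (N : ℕ) (γ : Fin n →₀ ℕ), wt γ ≤ N →
      ∃ c, dg K n j * Xmap K n (monomial γ 1) = Xmap K n (monomial γ 1) * dg K n j + c ∧
        ∀ m, wt γ ≤ m + 1 → c ∈ F K n m from h (wt γ) γ le_rfl
  intro N
  induction N with
  | zero =>
    intro γ hγ
    have : γ = 0 := wt_eq_zero (Nat.le_zero.mp hγ)
    subst this
    refine ⟨0, ?_, fun m _ => zero_mem _⟩
    simp [monomial_zero']
  | succ N IH =>
    intro γ hγ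
    by_cases hγ0 : γ = 0
    · subst hγ0
      refine ⟨0, ?_, fun m _ => zero_mem _⟩
      simp [monomial_zero']
    · obtain ⟨i, γ', hdec, hwt⟩ := exists_single_add hγ0
      have hXγ : Xmap K n (monomial γ 1) = xg K n i * Xmap K n (monomial γ' 1) := by
        rw [hdec, Xmono_add, Xmono_single, pow_one]
      obtain ⟨c', hc', hc'mem⟩ := IH γ' (by omega)
      refine ⟨xg K n i * c' + (if i = j then 1 else 0) * Xmap K n (monomial γ' 1), ?_, ?_⟩
      · rw [hXγ, ← mul_assoc, rel_dx j i, add_mul, mul_assoc, hc', mul_add, add_assoc,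
          mul_assoc]
      · intro m hm
        apply add_mem
        · by_cases hm1 : 1 ≤ m
          · have h1 : c' ∈ F K n (m - 1) := hc'mem (m - 1) (by omega)
            have h2 := xg_mul_F (i := i) h1
            have h3 : m - 1 + 1 = m := by omega
            rwa [h3] at h2
          · -- m = 0, so wt γ ≤ 1, so γ' = 0
            have : wt γ' = 0 := by omega
            have hγ'0 : γ' = 0 := wt_eq_zero this
            subst hγ'0
            have hc'0 : c' = 0 := by
              have h := hc'
              simp only [monomial_zero', C_1] at h
              rw [map_one, mul_one, one_mul] at h
              exact left_eq_add.mp h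
            rw [hc'0, mul_zero]
            exact zero_mem _
        · by_cases hij : i = j
          · rw [if_pos hij, one_mul]
            have : Xmap K n (monomial γ' 1) = mono K n γ' 0 := by
              rw [mono]
              simp
            rw [this]
            exact mono_mem_F (by
              have h0 : wt (0 : Fin n →₀ ℕ) = 0 := by simp [wt]
              omega)
          · rw [if_neg hij, zero_mul]
            exact zero_mem _

/-- the straightening lemma: products of monomials are monomials plus lower order terms -/
lemma straighten (β α γ δ : Fin n →₀ ℕ) :
    ∃ c, mono K n α β * mono K n γ δ = mono K n (α + γ) (β + δ) + c ∧
      ∀ m, wt α + wt β + wt γ + wt δ ≤ m + 1 → c ∈ F K n m := by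
  suffices h : ∀ (N : ℕ) (β α γ δ : Fin n →₀ ℕ), wt β ≤ N →
      ∃ c, mono K n α β * mono K n γ δ = mono K n (α + γ) (β + δ) + c ∧
        ∀ m, wt α + wt β + wt γ + wt δ ≤ m + 1 → c ∈ F K n m from
    h (wt β) β α γ δ le_rfl
  intro N
  induction N with
  | zero =>
    intro β α γ δ hβ
    have : β = 0 := wt_eq_zero (Nat.le_zero.mp hβ)
    subst this
    exact ⟨0, by rw [mono_left_mul, zero_add, add_zero], fun m _ => zero_mem _⟩
  | succ N IH =>
    intro β α γ δ hβ
    by_cases hβ0 : β = 0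
    · subst hβ0
      exact ⟨0, by rw [mono_left_mul, zero_add, add_zero], fun m _ => zero_mem _⟩
    · obtain ⟨j, β', hdec, hwt⟩ := exists_single_add hβ0
      have hβ'N : wt β' ≤ N := by omega
      have h1 : Dmap K n (monomial β 1) = Dmap K n (monomial β' 1) * dg K n j := by
        rw [hdec, add_comm, Dmono_add, Dmono_single, pow_one]
      have h2 : mono K n α β = mono K n α β' * dg K n j := by
        simp only [mono]
        rw [h1, mul_assoc]
      obtain ⟨c₁, hc₁, hc₁mem⟩ := dg_Xmono (K := K) j γ
      have h3 : dg K n j * Dmap K n (monomial δ 1) =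
          Dmap K n (monomial (Finsupp.single j 1 + δ) 1) := by
        rw [Dmono_add, Dmono_single, pow_one]
      have h4 : dg K n j * mono K n γ δ =
          mono K n γ (Finsupp.single j 1 + δ) + c₁ * Dmap K n (monomial δ 1) := by
        simp only [mono]
        rw [← mul_assoc, hc₁, add_mul, mul_assoc, h3]
      obtain ⟨c₂, hc₂, hc₂mem⟩ := IH β' α γ (Finsupp.single j 1 + δ) hβ'N
      have hβδ : β' + (Finsupp.single j 1 + δ) = β + δ := by
        rw [hdec]
        abel
      have hDδ : Dmap K n (monomial δ 1) = mono K n 0 δ := by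
        simp [mono]
      refine ⟨c₂ + mono K n α β' * (c₁ * Dmap K n (monomial δ 1)), ?_, ?_⟩
      · calc mono K n α β * mono K n γ δ
            = (mono K n α β' * dg K n j) * mono K n γ δ := by rw [← h2]
          _ = mono K n α β' * (dg K n j * mono K n γ δ) := mul_assoc _ _ _
          _ = mono K n α β' * (mono K n γ (Finsupp.single j 1 + δ)
                + c₁ * Dmap K n (monomial δ 1)) := by rw [h4]
          _ = mono K n α β' * mono K n γ (Finsupp.single j 1 + δ)
                + mono K n α β' * (c₁ * Dmap K n (monomial δ 1)) := mul_add _ _ _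
          _ = (mono K n (α + γ) (β' + (Finsupp.single j 1 + δ)) + c₂)
                + mono K n α β' * (c₁ * Dmap K n (monomial δ 1)) := by rw [hc₂]
          _ = mono K n (α + γ) (β + δ)
                + (c₂ + mono K n α β' * (c₁ * Dmap K n (monomial δ 1))) := by
              rw [hβδ, add_assoc]
      · intro m hm
        have hwtδ'' : wt (Finsupp.single j 1 + δ) = wt δ + 1 := by
          rw [wt_add, wt_single]; omega
        apply add_mem
        · exact hc₂mem m (by omega)
        · -- mono α β' * (c₁ * Dδ) ∈ F m
          have hc₁' : c₁ ∈ F K n (wt γ - 1) := hc₁mem (wt γ - 1) (by omega)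
          have hstep : c₁ * Dmap K n (monomial δ 1) ∈ F K n (wt γ - 1 + wt δ) := by
            rw [hDδ]
            exact F_mul_Dmono hc₁'
          have hmul : mono K n α β' * (c₁ * Dmap K n (monomial δ 1)) ∈
              F K n (wt α + wt β' + (wt γ - 1 + wt δ)) := by
            have hle : F K n (wt γ - 1 + wt δ) ≤
                Submodule.comap (LinearMap.mulLeft K (mono K n α β'))
                  (F K n (wt α + wt β' + (wt γ - 1 + wt δ))) := by
              rw [F, Submodule.span_le]
              rintro a ⟨γ₂, δ₂, hw, rfl⟩
              simp only [SetLike.mem_coe, Submodule.mem_comap, LinearMap.mulLeft_apply]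
              obtain ⟨c₃, hc₃, hc₃mem⟩ := IH β' α γ₂ δ₂ hβ'N
              rw [hc₃]
              refine add_mem (mono_mem_F ?_) (hc₃mem _ (by omega))
              rw [wt_add, wt_add]
              omega
            exact hle hstep
          exact F_mono (by omega) hmul

lemma F_mul_F {d e : ℕ} {a b : WeylN K n} (ha : a ∈ F K n d) (hb : b ∈ F K n e) :
    a * b ∈ F K n (d + e) := by
  have hgen : ∀ (α β : Fin n →₀ ℕ), wt α + wt β ≤ d → ∀ {b : WeylN K n}, b ∈ F K n e →
      mono K n α β * b ∈ F K n (d + e) := by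
    intro α β hw b hb
    have hle : F K n e ≤
        Submodule.comap (LinearMap.mulLeft K (mono K n α β)) (F K n (d + e)) := by
      rw [F, Submodule.span_le]
      rintro a ⟨γ, δ, hwg, rfl⟩
      simp only [SetLike.mem_coe, Submodule.mem_comap, LinearMap.mulLeft_apply]
      obtain ⟨c, hc, hcm⟩ := straighten (K := K) β α γ δ
      rw [hc]
      refine add_mem (mono_mem_F ?_) (hcm (d + e) (by omega))
      rw [wt_add, wt_add]
      omega
    exact hle hb
  have hle : F K n d ≤ Submodule.comap (LinearMap.mulRight K b) (F K n (d + e)) := by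
    rw [F, Submodule.span_le]
    rintro a ⟨α, β, hw, rfl⟩
    simp only [SetLike.mem_coe, Submodule.mem_comap, LinearMap.mulRight_apply]
    exact hgen α β hw hb
  exact hle ha

lemma exists_F (a : WeylN K n) : ∃ d, a ∈ F K n d := by
  have ha : a ∈ (⊤ : Subalgebra K (WeylN K n)) := trivial
  rw [← adjoin_gen_top] at ha
  refine Algebra.adjoin_induction ?_ ?_ ?_ ?_ ha
  · rintro x ⟨s, rfl⟩
    have h0 : wt (0 : Fin n →₀ ℕ) = 0 := by simp [wt]
    rcases s with i | i
    · refine ⟨1, ?_⟩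
      rw [show gen K n (Sum.inl i) = xg K n i from rfl, xg_eq_mono]
      exact mono_mem_F (by rw [wt_single, h0])
    · refine ⟨1, ?_⟩
      rw [show gen K n (Sum.inr i) = dg K n i from rfl, dg_eq_mono]
      exact mono_mem_F (by rw [wt_single, h0])
  · intro r
    exact ⟨0, by
      rw [Algebra.algebraMap_eq_smul_one]
      exact Submodule.smul_mem _ _ (one_mem_F 0)⟩
  · rintro x y - - ⟨d, hd⟩ ⟨e, he⟩
    exact ⟨max d e, add_mem (F_mono (le_max_left _ _) hd) (F_mono (le_max_right _ _) he)⟩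
  · rintro x y - - ⟨d, hd⟩ ⟨e, he⟩
    exact ⟨d + e, F_mul_F hd he⟩

/-! ### The faithful representation on polynomials -/

/-- commutativity of partial derivatives -/
lemma pderiv_comm' {σR : Type*} (i j : σR) (f : MvPolynomial σR K) :
    pderiv i (pderiv j f) = pderiv j (pderiv i f) := by
  induction f using MvPolynomial.induction_on with
  | C a => simp
  | add p q hp hq => simp [hp, hq]
  | mul_X p k hp =>
    have h2 : ∀ a b : σR, pderiv a (pderiv b (X k : MvPolynomial σR K)) = 0 := by
      intro a b
      by_cases h : k = b
      · subst h
        rw [pderiv_X_self]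
        exact pderiv_one
      · rw [pderiv_X_of_ne h, map_zero]
    simp only [pderiv_mul, map_add, h2, mul_zero, add_zero, hp]
    ring

variable (K n) in
/-- operators representing the generators -/
def op : Fin n ⊕ Fin n → Module.End K (MvPolynomial (Fin n ⊕ Fin n) K)
  | Sum.inl i => Algebra.lmul K _ (X (Sum.inl i))
  | Sum.inr i => (pderiv (Sum.inl i)).toLinearMap + Algebra.lmul K _ (X (Sum.inr i))

lemma lmul_app (q f : MvPolynomial (Fin n ⊕ Fin n) K) : Algebra.lmul K _ q f = q * f := rfl

lemma pd_app (s : Fin n ⊕ Fin n) (f : MvPolynomial (Fin n ⊕ Fin n) K) :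
    ((pderiv (R := K) s).toLinearMap) f = pderiv s f := rfl

lemma pd_lmul (s : Fin n ⊕ Fin n) (q : MvPolynomial (Fin n ⊕ Fin n) K) :
    ((pderiv (R := K) s).toLinearMap) * Algebra.lmul K _ q
      = Algebra.lmul K _ q * ((pderiv (R := K) s).toLinearMap)
        + Algebra.lmul K _ (pderiv s q) := by
  apply LinearMap.ext
  intro f
  simp only [Module.End.mul_apply, LinearMap.add_apply, lmul_app, pd_app]
  rw [pderiv_mul]
  ring

lemma pd_lmul_of_ne {s t : Fin n ⊕ Fin n} (h : t ≠ s) :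
    ((pderiv (R := K) s).toLinearMap) * Algebra.lmul K _ (X t)
      = Algebra.lmul K _ (X t) * ((pderiv (R := K) s).toLinearMap) := by
  rw [pd_lmul, pderiv_X_of_ne h, map_zero, add_zero]

lemma pd_lmul_self (s : Fin n ⊕ Fin n) :
    ((pderiv (R := K) s).toLinearMap) * Algebra.lmul K _ (X s)
      = Algebra.lmul K _ (X s) * ((pderiv (R := K) s).toLinearMap) + 1 := by
  rw [pd_lmul, pderiv_X_self, map_one]

lemma pd_pd (s t : Fin n ⊕ Fin n) :
    ((pderiv (R := K) s).toLinearMap) * ((pderiv (R := K) t).toLinearMap)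
      = ((pderiv (R := K) t).toLinearMap) * ((pderiv (R := K) s).toLinearMap) := by
  apply LinearMap.ext
  intro f
  simp only [Module.End.mul_apply, pd_app]
  exact pderiv_comm' s t f

lemma lmul_lmul (q r : MvPolynomial (Fin n ⊕ Fin n) K) :
    Algebra.lmul K _ q * Algebra.lmul K _ r = Algebra.lmul K _ r * Algebra.lmul K _ q := by
  rw [← map_mul, ← map_mul, mul_comm]

variable (K n) in
/-- the representation of the Weyl algebra -/
def φ : WeylN K n →ₐ[K] Module.End K (MvPolynomial (Fin n ⊕ Fin n) K) :=
  RingQuot.liftAlgHom K ⟨FreeAlgebra.lift K (op K n), by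
    intro a b h
    induction h with
    | xx i j =>
      simp only [map_mul, FreeAlgebra.lift_ι_apply, op]
      exact lmul_lmul _ _
    | dd i j =>
      simp only [map_mul, FreeAlgebra.lift_ι_apply, op]
      rw [add_mul, mul_add, mul_add, add_mul, mul_add, mul_add]
      rw [pd_pd (Sum.inl i) (Sum.inl j),
        pd_lmul_of_ne (show (Sum.inr j : Fin n ⊕ Fin n) ≠ Sum.inl i by simp),
        pd_lmul_of_ne (show (Sum.inr i : Fin n ⊕ Fin n) ≠ Sum.inl j by simp),
        lmul_lmul (X (Sum.inr i)) (X (Sum.inr j))]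
      abel
    | dx_ne i j hij =>
      simp only [map_mul, FreeAlgebra.lift_ι_apply, op]
      rw [add_mul, mul_add]
      rw [pd_lmul_of_ne (show (Sum.inl j : Fin n ⊕ Fin n) ≠ Sum.inl i by simp [hij.symm]),
        lmul_lmul (X (Sum.inr i)) (X (Sum.inl j))]
    | dx i =>
      simp only [map_mul, FreeAlgebra.lift_ι_apply, map_add, map_one, op]
      rw [add_mul, mul_add]
      rw [pd_lmul_self (Sum.inl i), lmul_lmul (X (Sum.inr i)) (X (Sum.inl i))]
      abel⟩

lemma φ_gen (s : Fin n ⊕ Fin n) : φ K n (gen K n s) = op K n s := by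
  rw [gen, φ, RingQuot.liftAlgHom_mkAlgHom_apply, FreeAlgebra.lift_ι_apply]

variable (K n) in
/-- the symbol map -/
def σL : WeylN K n →ₗ[K] MvPolynomial (Fin n ⊕ Fin n) K where
  toFun a := φ K n a 1
  map_add' a b := by simp only [map_add, LinearMap.add_apply]
  map_smul' c a := by simp only [map_smul, LinearMap.smul_apply, RingHom.id_apply]

lemma φ_Xmap (q : MvPolynomial (Fin n) K) :
    φ K n (Xmap K n q) = Algebra.lmul K _ (rename Sum.inl q) := by
  have h : (φ K n).comp (Xmap K n) =
      (Algebra.lmul K (MvPolynomial (Fin n ⊕ Fin n) K)).comp (rename Sum.inl) := by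
    apply MvPolynomial.algHom_ext
    intro i
    simp only [AlgHom.comp_apply, Xmap_X, rename_X]
    exact φ_gen (Sum.inl i)
  exact DFunLike.congr_fun h q

lemma pderiv_rename_inr (i : Fin n) (r : MvPolynomial (Fin n) K) :
    pderiv (Sum.inl i) (rename (Sum.inr : Fin n → Fin n ⊕ Fin n) r) = 0 := by
  induction r using MvPolynomial.induction_on with
  | C a => simp
  | add p q hp hq => simp [hp, hq]
  | mul_X p k hp =>
    rw [map_mul, pderiv_mul, hp, rename_X,
      pderiv_X_of_ne (show (Sum.inr k : Fin n ⊕ Fin n) ≠ Sum.inl i by simp)]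
    simp

lemma φ_Dmap_apply (q r : MvPolynomial (Fin n) K) :
    φ K n (Dmap K n q) (rename (Sum.inr : Fin n → Fin n ⊕ Fin n) r)
      = rename Sum.inr (q * r) := by
  induction q using MvPolynomial.induction_on generalizing r with
  | C a =>
    have h1 : Dmap K n (C a) = algebraMap K (WeylN K n) a := (Dmap K n).commutes a
    rw [h1, AlgHom.commutes, Module.algebraMap_end_apply, ← map_smul]
    congr 1
    rw [smul_eq_C_mul]
  | add p q hp hq =>
    rw [map_add, map_add, LinearMap.add_apply, hp, hq, ← map_add, add_mul]
  | mul_X p k hp =>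
    have h1 : Dmap K n (p * X k) = Dmap K n p * dg K n k := by rw [map_mul, Dmap_X]
    rw [h1, map_mul, Module.End.mul_apply]
    have h2 : φ K n (dg K n k) (rename Sum.inr r) = rename Sum.inr (X k * r) := by
      rw [show dg K n k = gen K n (Sum.inr k) from rfl, φ_gen]
      simp only [op, LinearMap.add_apply, pd_app, lmul_app]
      rw [pderiv_rename_inr, map_mul, rename_X, zero_add]
    rw [h2, hp]
    congr 1
    ring

/-- merging two exponent vectors -/
def combine (α β : Fin n →₀ ℕ) : (Fin n ⊕ Fin n) →₀ ℕ :=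
  α.mapDomain Sum.inl + β.mapDomain Sum.inr

lemma σ_mono (α β : Fin n →₀ ℕ) :
    σL K n (mono K n α β) = monomial (combine α β) 1 := by
  have h1 : φ K n (Dmap K n (monomial β 1)) 1 = monomial (β.mapDomain Sum.inr) 1 := by
    have h0 : (1 : MvPolynomial (Fin n ⊕ Fin n) K)
        = rename (Sum.inr : Fin n → Fin n ⊕ Fin n) 1 := (map_one _).symm
    rw [h0, φ_Dmap_apply, mul_one, rename_monomial]
  show φ K n (mono K n α β) 1 = _
  rw [mono, map_mul, Module.End.mul_apply, h1, φ_Xmap, lmul_app, rename_monomial,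
    monomial_mul, one_mul]
  rfl

lemma wt_mapDomain {ι κ : Type*} (f : ι → κ) (α : ι →₀ ℕ) :
    wt (α.mapDomain f) = wt α := by
  rw [wt, wt]
  exact Finsupp.sum_mapDomain_index (fun _ => rfl) (fun _ _ _ => rfl)

lemma wt_combine (α β : Fin n →₀ ℕ) : wt (combine α β) = wt α + wt β := by
  rw [combine, wt_add, wt_mapDomain, wt_mapDomain]

variable (n) in
/-- first projection of an exponent vector on the sum type -/
def prL (μ : (Fin n ⊕ Fin n) →₀ ℕ) : Fin n →₀ ℕ :=
  (Finsupp.sumFinsuppAddEquivProdFinsupp μ).1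

variable (n) in
def prR (μ : (Fin n ⊕ Fin n) →₀ ℕ) : Fin n →₀ ℕ :=
  (Finsupp.sumFinsuppAddEquivProdFinsupp μ).2

lemma prL_apply (μ : (Fin n ⊕ Fin n) →₀ ℕ) (i : Fin n) : prL n μ i = μ (Sum.inl i) := rfl
lemma prR_apply (μ : (Fin n ⊕ Fin n) →₀ ℕ) (i : Fin n) : prR n μ i = μ (Sum.inr i) := rfl

lemma combine_apply_inl (α β : Fin n →₀ ℕ) (i : Fin n) : combine α β (Sum.inl i) = α i := by
  rw [combine, Finsupp.add_apply, Finsupp.mapDomain_apply Sum.inl_injective,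
    Finsupp.mapDomain_notin_range _ _ (by simp), add_zero]

lemma combine_apply_inr (α β : Fin n →₀ ℕ) (i : Fin n) : combine α β (Sum.inr i) = β i := by
  rw [combine, Finsupp.add_apply, Finsupp.mapDomain_apply Sum.inr_injective,
    Finsupp.mapDomain_notin_range _ _ (by simp), zero_add]

lemma combine_pr (μ : (Fin n ⊕ Fin n) →₀ ℕ) : combine (prL n μ) (prR n μ) = μ := by
  ext s
  rcases s with i | i
  · rw [combine_apply_inl, prL_apply]
  · rw [combine_apply_inr, prR_apply]

lemma prL_combine (α β : Fin n →₀ ℕ) : prL n (combine α β) = α := by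
  ext i; rw [prL_apply, combine_apply_inl]

lemma prR_combine (α β : Fin n →₀ ℕ) : prR n (combine α β) = β := by
  ext i; rw [prR_apply, combine_apply_inr]

variable (K n) in
/-- the normal ordering (inverse of the symbol map) -/
def ψ : MvPolynomial (Fin n ⊕ Fin n) K →ₗ[K] WeylN K n :=
  (basisMonomials (Fin n ⊕ Fin n) K).constr K (fun μ => mono K n (prL n μ) (prR n μ))

lemma ψ_monomial (μ : (Fin n ⊕ Fin n) →₀ ℕ) :
    ψ K n (monomial μ 1) = mono K n (prL n μ) (prR n μ) := by
  have h : (monomial μ (1 : K)) = basisMonomials (Fin n ⊕ Fin n) K μ := by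
    rw [coe_basisMonomials]
  rw [h, ψ, Module.Basis.constr_basis]

lemma σψ (q : MvPolynomial (Fin n ⊕ Fin n) K) : σL K n (ψ K n q) = q := by
  have h : (σL K n).comp (ψ K n) = LinearMap.id := by
    apply (basisMonomials (Fin n ⊕ Fin n) K).ext
    intro μ
    rw [LinearMap.comp_apply, LinearMap.id_apply, show basisMonomials (Fin n ⊕ Fin n) K μ
      = monomial μ 1 from by rw [coe_basisMonomials], ψ_monomial, σ_mono, combine_pr]
  exact DFunLike.congr_fun h q

lemma eq_psi_sigma (a : WeylN K n) : ψ K n (σL K n a) = a := by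
  obtain ⟨d, hd⟩ := exists_F a
  have hle : F K n d ≤ LinearMap.eqLocus ((ψ K n).comp (σL K n)) LinearMap.id := by
    rw [F, Submodule.span_le]
    rintro b ⟨α, β, hw, rfl⟩
    show ψ K n (σL K n (mono K n α β)) = mono K n α β
    rw [σ_mono, ψ_monomial, prL_combine, prR_combine]
  exact hle hd

lemma σ_inj : Function.Injective (σL K n) := by
  intro a b h
  rw [← eq_psi_sigma a, ← eq_psi_sigma b, h]

lemma ψ_mem_F (q : MvPolynomial (Fin n ⊕ Fin n) K) : ψ K n q ∈ F K n q.totalDegree := by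
  have h := congrArg (ψ K n) (as_sum q)
  rw [map_sum] at h
  rw [h]
  apply Submodule.sum_mem
  intro μ hμ
  have h1 : (monomial μ) (coeff μ q) = (coeff μ q) • monomial μ (1 : K) := by
    rw [smul_monomial, smul_eq_mul, mul_one]
  rw [h1, map_smul]
  apply Submodule.smul_mem
  rw [ψ_monomial]
  apply mono_mem_F
  have h2 : wt (prL n μ) + wt (prR n μ) = wt μ := by
    rw [← wt_combine, combine_pr]
  rw [h2]
  exact MvPolynomial.le_totalDegree hμ

lemma σ_F {d : ℕ} {a : WeylN K n} (ha : a ∈ F K n d) : (σL K n a).totalDegree ≤ d := by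
  have hle : F K n d ≤ Submodule.comap (σL K n)
      (restrictTotalDegree (Fin n ⊕ Fin n) K d) := by
    rw [F, Submodule.span_le]
    rintro b ⟨α, β, hw, rfl⟩
    simp only [SetLike.mem_coe, Submodule.mem_comap]
    rw [σ_mono, mem_restrictTotalDegree, totalDegree_monomial _ (one_ne_zero)]
    rw [show ((combine α β).sum fun _ e => e) = wt (combine α β) from rfl, wt_combine]
    exact hw
  exact (mem_restrictTotalDegree _ _ _).mp (hle ha)

/-! ### Characteristic and injectivity facts -/

lemma σ_algebraMap (c : K) : σL K n (algebraMap K (WeylN K n) c) = C c := by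
  show φ K n (algebraMap K (WeylN K n) c) 1 = C c
  rw [AlgHom.commutes, Module.algebraMap_end_apply, smul_eq_C_mul, mul_one]

lemma algebraMap_inj : Function.Injective (algebraMap K (WeylN K n)) := by
  intro c d h
  have := congrArg (σL K n) h
  rw [σ_algebraMap, σ_algebraMap] at this
  exact MvPolynomial.C_injective _ _ this

lemma σ_one : σL K n (1 : WeylN K n) = 1 := by
  show φ K n 1 1 = 1
  simp

lemma weyl_nontrivial : Nontrivial (WeylN K n) := by
  refine ⟨0, 1, fun h => ?_⟩
  have := congrArg (σL K n) h
  rw [map_zero, σ_one] at this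
  exact zero_ne_one this

lemma σ_mul_lower {d e m : ℕ} (hm : d + e ≤ m + 1) {a b : WeylN K n}
    (ha : a ∈ F K n d) (hb : b ∈ F K n e) :
    σL K n (a * b) - σL K n a * σL K n b ∈ restrictTotalDegree (Fin n ⊕ Fin n) K m := by
  have step1 : ∀ (α β : Fin n →₀ ℕ), wt α + wt β ≤ d → ∀ {b : WeylN K n}, b ∈ F K n e →
      σL K n (mono K n α β * b) - σL K n (mono K n α β) * σL K n b ∈
        restrictTotalDegree (Fin n ⊕ Fin n) K m := by
    intro α β hw b hb
    have hle : F K n e ≤ Submodule.comap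
        ((σL K n).comp (LinearMap.mulLeft K (mono K n α β))
          - (LinearMap.mulLeft K (σL K n (mono K n α β))).comp (σL K n))
        (restrictTotalDegree (Fin n ⊕ Fin n) K m) := by
      rw [F, Submodule.span_le]
      rintro x ⟨γ, δ, hw2, rfl⟩
      simp only [SetLike.mem_coe, Submodule.mem_comap, LinearMap.sub_apply,
        LinearMap.comp_apply, LinearMap.mulLeft_apply]
      obtain ⟨c, hc, hcm⟩ := straighten (K := K) β α γ δ
      have hcomb : combine (α + γ) (β + δ) = combine α β + combine γ δ := by
        rw [combine, combine, combine, Finsupp.mapDomain_add, Finsupp.mapDomain_add]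
        abel
      rw [hc, map_add, σ_mono, σ_mono, σ_mono, monomial_mul, one_mul, hcomb,
        add_comm ((monomial (combine α β + combine γ δ)) (1:K)) (σL K n c),
        add_sub_cancel_right]
      rw [mem_restrictTotalDegree]
      exact σ_F (hcm m (by omega))
    have := hle hb
    simpa only [Submodule.mem_comap, LinearMap.sub_apply, LinearMap.comp_apply,
      LinearMap.mulLeft_apply] using this
  have hle : F K n d ≤ Submodule.comap
      ((σL K n).comp (LinearMap.mulRight K b)
        - (LinearMap.mulRight K (σL K n b)).comp (σL K n))
      (restrictTotalDegree (Fin n ⊕ Fin n) K m) := by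
    rw [F, Submodule.span_le]
    rintro x ⟨α, β, hw, rfl⟩
    simp only [SetLike.mem_coe, Submodule.mem_comap, LinearMap.sub_apply,
      LinearMap.comp_apply, LinearMap.mulRight_apply]
    exact step1 α β hw hb
  have := hle ha
  simpa only [Submodule.mem_comap, LinearMap.sub_apply, LinearMap.comp_apply,
    LinearMap.mulRight_apply] using this

lemma σ_pow_lower {d : ℕ} (hd : 1 ≤ d) {a : WeylN K n} (ha : a ∈ F K n d) :
    ∀ k, 1 ≤ k → a ^ k ∈ F K n (k * d) ∧
      σL K n (a ^ k) - (σL K n a) ^ k ∈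
        restrictTotalDegree (Fin n ⊕ Fin n) K (k * d - 1) := by
  intro k hk
  induction k with
  | zero => omega
  | succ k IH =>
    by_cases hk0 : k = 0
    · subst hk0
      constructor
      · simpa only [zero_add, pow_one, one_mul] using ha
      · simp only [zero_add, pow_one, sub_self]
        exact zero_mem _
    · have hk1 : 1 ≤ k := by omega
      obtain ⟨hFk, hPk⟩ := IH hk1
      have hkd : 1 ≤ k * d := by
        calc 1 = 1 * 1 := by ring
        _ ≤ k * d := Nat.mul_le_mul hk1 hd
      have hsm : (k + 1) * d = k * d + d := by rw [Nat.succ_mul]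
      constructor
      · rw [pow_succ, hsm]
        exact F_mul_F hFk ha
      · have h1 : σL K n (a ^ (k+1)) - σL K n (a ^ k) * σL K n a ∈
            restrictTotalDegree (Fin n ⊕ Fin n) K ((k+1) * d - 1) := by
          rw [pow_succ]
          exact σ_mul_lower (by omega) hFk ha
        have h2 : (σL K n (a ^ k) - (σL K n a) ^ k) * σL K n a ∈
            restrictTotalDegree (Fin n ⊕ Fin n) K ((k+1) * d - 1) := by
          rw [mem_restrictTotalDegree]
          calc ((σL K n (a ^ k) - (σL K n a) ^ k) * σL K n a).totalDegree
              ≤ (σL K n (a ^ k) - (σL K n a) ^ k).totalDegree + (σL K n a).totalDegree :=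
                totalDegree_mul _ _
            _ ≤ (k * d - 1) + d := by
                have := (mem_restrictTotalDegree _ _ _).mp hPk
                have h3 : (σL K n a).totalDegree ≤ d := σ_F ha
                omega
            _ ≤ (k+1) * d - 1 := by omega
        have h4 : σL K n (a ^ (k+1)) - (σL K n a) ^ (k+1)
            = (σL K n (a ^ (k+1)) - σL K n (a ^ k) * σL K n a)
              + (σL K n (a ^ k) - (σL K n a) ^ k) * σL K n a := by
          rw [pow_succ]
          ring
        rw [h4]
        exact add_mem h1 h2

lemma wt_smul {ι : Type*} (k : ℕ) (μ : ι →₀ ℕ) : wt (k • μ) = k * wt μ := by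
  induction k with
  | zero =>
    rw [zero_smul, zero_mul]
    simp [wt]
  | succ k IH => rw [succ_nsmul, wt_add, IH, Nat.succ_mul]

lemma coeff_pow_char {p : ℕ} (hp : p.Prime) [CharP K p]
    (f : MvPolynomial (Fin n ⊕ Fin n) K) (μ : (Fin n ⊕ Fin n) →₀ ℕ) :
    coeff (p • μ) (f ^ p) = (coeff μ f) ^ p := by
  haveI := Fact.mk hp
  have hsmul_inj : ∀ b ν : (Fin n ⊕ Fin n) →₀ ℕ, p • b = p • ν → b = ν := by
    intro b ν hb
    ext a
    have := congrArg (fun g => g a) hb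
    simp only [Finsupp.coe_smul, Pi.smul_apply, smul_eq_mul] at this
    exact Nat.eq_of_mul_eq_mul_left hp.pos this
  have hfp : f ^ p = ∑ v ∈ f.support, monomial (p • v) ((coeff v f) ^ p) := by
    conv_lhs => rw [as_sum f]
    rw [sum_pow_char]
    exact Finset.sum_congr rfl fun v _ => monomial_pow
  rw [hfp, coeff_sum]
  by_cases hμ : μ ∈ f.support
  · have h1 : ∀ b ∈ f.support, b ≠ μ →
        coeff (p • μ) (monomial (p • b) ((coeff b f) ^ p)) = 0 := by
      intro b _ hbne
      rw [coeff_monomial, if_neg (fun hcon => hbne (hsmul_inj b μ hcon))]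
    have h2 : μ ∉ f.support → coeff (p • μ) (monomial (p • μ) ((coeff μ f) ^ p)) = 0 :=
      fun hnot => absurd hμ hnot
    rw [Finset.sum_eq_single μ h1 h2, coeff_monomial, if_pos rfl]
  · have hc0 : coeff μ f = 0 := notMem_support_iff.mp hμ
    rw [hc0, zero_pow hp.ne_zero]
    apply Finset.sum_eq_zero
    intro v hv
    rw [coeff_monomial, if_neg]
    intro hcon
    exact hμ (hsmul_inj v μ hcon ▸ hv)

lemma psi_X (s : Fin n ⊕ Fin n) : ψ K n (X s) = gen K n s := by
  rw [← pow_one (X s : MvPolynomial (Fin n ⊕ Fin n) K), X_pow_eq_monomial, ψ_monomial]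
  rcases s with i | i
  · have hl : prL n (Finsupp.single (Sum.inl i) 1) = Finsupp.single i 1 := by
      ext j
      rw [prL_apply]
      simp [Finsupp.single_apply]
    have hr : prR n (Finsupp.single (Sum.inl i) 1) = 0 := by
      ext j
      rw [prR_apply]
      simp [Finsupp.single_apply]
    rw [hl, hr, ← xg_eq_mono]
    rfl
  · have hl : prL n (Finsupp.single (Sum.inr i) 1) = 0 := by
      ext j
      rw [prL_apply]
      simp [Finsupp.single_apply]
    have hr : prR n (Finsupp.single (Sum.inr i) 1) = Finsupp.single i 1 := by
      ext j
      rw [prR_apply]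
      simp [Finsupp.single_apply]
    rw [hl, hr, ← dg_eq_mono]
    rfl

lemma σ_gen (s : Fin n ⊕ Fin n) : σL K n (gen K n s) = X s := by
  rw [← psi_X, σψ]

lemma gen_mem_F (s : Fin n ⊕ Fin n) : gen K n s ∈ F K n 1 := by
  have h0 : wt (0 : Fin n →₀ ℕ) = 0 := by simp [wt]
  rcases s with i | i
  · rw [show gen K n (Sum.inl i) = xg K n i from rfl, xg_eq_mono]
    exact mono_mem_F (by rw [wt_single, h0])
  · rw [show gen K n (Sum.inr i) = dg K n i from rfl, dg_eq_mono]
    exact mono_mem_F (by rw [wt_single, h0])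

/-- THE key lemma: an element whose `p`-th power equals `gen s ^ p` is `gen s`. -/
lemma key {p : ℕ} (hp : p.Prime) [CharP K p] (s : Fin n ⊕ Fin n) (a : WeylN K n)
    (h : a ^ p = gen K n s ^ p) : a = gen K n s := by
  haveI := Fact.mk hp
  haveI : Nontrivial (WeylN K n) := weyl_nontrivial
  haveI : CharP (WeylN K n) p := charP_of_injective_algebraMap algebraMap_inj p
  set f := σL K n a with hf
  have ha_psi : ψ K n f = a := eq_psi_sigma a
  set d := max f.totalDegree 1 with hd
  have hd1 : 1 ≤ d := le_max_right _ _
  have haF : a ∈ F K n d := by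
    rw [← ha_psi]
    exact F_mono (le_max_left _ _) (ψ_mem_F f)
  have hp1 : 1 ≤ p := hp.pos
  obtain ⟨hFpow, hPpow⟩ := σ_pow_lower hd1 haF p hp1
  obtain ⟨_, hPgen⟩ := σ_pow_lower le_rfl (gen_mem_F (K := K) s) p hp1
  rw [σ_gen] at hPgen
  rw [h] at hPpow
  have hPgen' : σL K n (gen K n s ^ p) - (X s : MvPolynomial (Fin n ⊕ Fin n) K) ^ p ∈
      restrictTotalDegree (Fin n ⊕ Fin n) K (p * d - 1) := by
    rw [mem_restrictTotalDegree] at hPgen ⊢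
    refine hPgen.trans ?_
    have : p * 1 ≤ p * d := Nat.mul_le_mul_left p hd1
    omega
  have hcomb : f ^ p - (X s : MvPolynomial (Fin n ⊕ Fin n) K) ^ p ∈
      restrictTotalDegree (Fin n ⊕ Fin n) K (p * d - 1) := by
    have hx := sub_mem hPgen' hPpow
    have h3 : (σL K n (gen K n s ^ p) - (X s : MvPolynomial (Fin n ⊕ Fin n) K) ^ p)
        - (σL K n (gen K n s ^ p) - f ^ p)
        = f ^ p - (X s : MvPolynomial (Fin n ⊕ Fin n) K) ^ p := by ring
    rwa [h3] at hx
  -- step 1 : totalDegree f ≤ 1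
  have hdeg : f.totalDegree ≤ 1 := by
    by_contra hgt
    push_neg at hgt
    have hd_eq : d = f.totalDegree := max_eq_left (by omega)
    have hfne : f ≠ 0 := by
      intro h0
      rw [h0, totalDegree_zero] at hgt
      omega
    have htd : f.totalDegree = f.support.sup (fun μ => μ.sum fun _ e => e) := rfl
    obtain ⟨μ₀, hμ₀s, hμ₀d⟩ := Finset.exists_mem_eq_sup f.support
      (support_nonempty.mpr hfne) (fun μ => μ.sum fun _ e => e)
    have hwtμ₀ : wt μ₀ = f.totalDegree := by rw [htd, hμ₀d]; rfl
    have hge2 : 2 ≤ wt μ₀ := by omega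
    have hc : coeff (p • μ₀) (f ^ p) = (coeff μ₀ f) ^ p := coeff_pow_char hp f μ₀
    have hwt_p : wt (p • μ₀) = p * wt μ₀ := wt_smul p μ₀
    have h1 : coeff (p • μ₀) ((X s : MvPolynomial (Fin n ⊕ Fin n) K) ^ p) = 0 := by
      rw [X_pow_eq_monomial, coeff_monomial, if_neg]
      intro heq
      have := congrArg wt heq
      rw [wt_single, hwt_p] at this
      have h2p : p * 2 ≤ p * wt μ₀ := Nat.mul_le_mul_left p hge2
      omega
    have h2 : coeff (p • μ₀) (f ^ p - (X s : MvPolynomial (Fin n ⊕ Fin n) K) ^ p) = 0 := by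
      apply coeff_eq_zero_of_totalDegree_lt
      have hmem := (mem_restrictTotalDegree _ _ _).mp hcomb
      have hsum : (∑ i ∈ (p • μ₀).support, (p • μ₀) i) = wt (p • μ₀) := rfl
      rw [hsum, hwt_p, hwtμ₀, ← hd_eq]
      have hpd : 1 ≤ p * d := by
        calc 1 = 1 * 1 := by ring
        _ ≤ p * d := Nat.mul_le_mul hp1 hd1
      omega
    rw [coeff_sub, hc, h1, sub_zero] at h2
    have : coeff μ₀ f = 0 := by
      have := pow_eq_zero_iff (n := p) hp.ne_zero |>.mp h2
      exact this
    exact (mem_support_iff.mp hμ₀s) this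
  -- step 2 : extract the coefficients of f
  have hd_eq1 : d = 1 := max_eq_right hdeg
  rw [hd_eq1, mul_one] at hcomb
  have hcoeffs : ∀ u : Fin n ⊕ Fin n,
      (coeff (Finsupp.single u 1) f) ^ p = if u = s then 1 else 0 := by
    intro u
    have hsm : p • Finsupp.single u (1 : ℕ) = Finsupp.single u p := by
      rw [Finsupp.smul_single, smul_eq_mul, mul_one]
    have h1 : coeff (Finsupp.single u p) (f ^ p) = (coeff (Finsupp.single u 1) f) ^ p := by
      rw [← hsm, coeff_pow_char hp]
    have h2 : coeff (Finsupp.single u p)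
        (f ^ p - (X s : MvPolynomial (Fin n ⊕ Fin n) K) ^ p) = 0 := by
      apply coeff_eq_zero_of_totalDegree_lt
      have hmem := (mem_restrictTotalDegree _ _ _).mp hcomb
      have hsum : (∑ i ∈ (Finsupp.single u p).support, (Finsupp.single u p) i)
          = wt (Finsupp.single u p) := rfl
      rw [hsum, wt_single]
      omega
    have h3 : coeff (Finsupp.single u p) ((X s : MvPolynomial (Fin n ⊕ Fin n) K) ^ p)
        = if u = s then 1 else 0 := by
      rw [X_pow_eq_monomial, coeff_monomial]
      by_cases hus : u = s
      · subst hus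
        rw [if_pos rfl, if_pos rfl]
      · rw [if_neg, if_neg hus]
        intro hcon
        exact hus ((Finsupp.single_left_inj hp.ne_zero).mp hcon).symm
    rw [coeff_sub, h1, h3] at h2
    by_cases hus : u = s
    · rw [if_pos hus] at h2 ⊢
      exact sub_eq_zero.mp h2
    · rw [if_neg hus] at h2 ⊢
      rw [sub_zero] at h2
      exact h2
  have hcoeff1 : coeff (Finsupp.single s 1) f = 1 := by
    have hcs := hcoeffs s
    rw [if_pos rfl] at hcs
    have hzero : (coeff (Finsupp.single s 1) f - 1) ^ p = 0 := by
      rw [sub_pow_char, hcs, one_pow, sub_self]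
    exact sub_eq_zero.mp (pow_eq_zero_iff hp.ne_zero |>.mp hzero)
  have hcoeff0 : ∀ u : Fin n ⊕ Fin n, u ≠ s → coeff (Finsupp.single u 1) f = 0 := by
    intro u hus
    have hcs := hcoeffs u
    rw [if_neg hus] at hcs
    exact pow_eq_zero_iff hp.ne_zero |>.mp hcs
  -- step 3 : f = C c₀ + X s
  set c₀ := coeff 0 f with hc₀
  have hfeq : f = C c₀ + X s := by
    apply MvPolynomial.ext
    intro μ
    rw [coeff_add, coeff_C, ← pow_one (X s : MvPolynomial (Fin n ⊕ Fin n) K),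
      X_pow_eq_monomial, coeff_monomial]
    by_cases h0 : μ = 0
    · subst h0
      rw [if_pos rfl, if_neg]
      · rw [add_zero]
      · intro hcon
        have := congrArg wt hcon
        rw [wt_single] at this
        simp [wt] at this
    · rw [if_neg (fun hcon => h0 hcon.symm)]
      have hwμ : 1 ≤ wt μ := by
        rcases Nat.eq_zero_or_pos (wt μ) with h | h
        · exact absurd (wt_eq_zero h) h0
        · exact h
      by_cases h1 : wt μ = 1
      · obtain ⟨u, rfl⟩ := wt_eq_one h1
        by_cases hus : u = s
        · subst hus
          rw [if_pos rfl, zero_add, hcoeff1]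
        · rw [if_neg (fun hcon => hus (((Finsupp.single_left_inj one_ne_zero).mp hcon).symm)),
            zero_add, hcoeff0 u hus]
      · -- wt μ ≥ 2
        have hlt : f.totalDegree < ∑ i ∈ μ.support, μ i := by
          have hsum : (∑ i ∈ μ.support, μ i) = wt μ := rfl
          omega
        rw [coeff_eq_zero_of_totalDegree_lt hlt, if_neg, zero_add]
        intro hcon
        have := congrArg wt hcon
        rw [wt_single] at this
        omega
  -- step 4 : a = algebraMap c₀ + gen s
  have hL0 : prL n (0 : (Fin n ⊕ Fin n) →₀ ℕ) = 0 := by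
    ext j
    rw [prL_apply]
    rfl
  have hR0 : prR n (0 : (Fin n ⊕ Fin n) →₀ ℕ) = 0 := by
    ext j
    rw [prR_apply]
    rfl
  have hpsiC : ψ K n (C c₀ : MvPolynomial (Fin n ⊕ Fin n) K)
      = algebraMap K (WeylN K n) c₀ := by
    have h1 : (C c₀ : MvPolynomial (Fin n ⊕ Fin n) K) = c₀ • monomial 0 1 := by
      rw [smul_monomial, smul_eq_mul, mul_one]
      rw [show ((monomial (0 : (Fin n ⊕ Fin n) →₀ ℕ)) c₀) = C c₀ from by
        rw [monomial_zero']]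
    rw [h1, map_smul, ψ_monomial, hL0, hR0, mono_zero_zero,
      Algebra.algebraMap_eq_smul_one]
  have ha_eq : a = algebraMap K (WeylN K n) c₀ + gen K n s := by
    rw [← ha_psi, hfeq, map_add, hpsiC, psi_X]
  -- step 5 : conclude c₀ = 0
  rw [ha_eq] at h
  have hcomm : Commute (algebraMap K (WeylN K n) c₀) (gen K n s) := by
    unfold Commute SemiconjBy
    rw [Algebra.commutes]
  rw [add_pow_char_of_commute p hcomm, ← map_pow] at h
  have hc0p : algebraMap K (WeylN K n) (c₀ ^ p) = 0 := add_eq_right.mp h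
  have hc0 : c₀ ^ p = 0 := algebraMap_inj (by rw [hc0p, map_zero])
  have hc0' : c₀ = 0 := pow_eq_zero_iff hp.ne_zero |>.mp hc0
  rw [ha_eq, hc0', map_zero, zero_add]

lemma dg_xg_pow (i : Fin n) (k : ℕ) :
    dg K n i * xg K n i ^ k
      = xg K n i ^ k * dg K n i + (k : WeylN K n) * xg K n i ^ (k - 1) := by
  induction k with
  | zero => simp
  | succ k IH =>
    by_cases hk : k = 0
    · subst hk
      have h := rel_dx (K := K) i i
      rw [if_pos rfl] at h
      simp [h]
    · have hk1 : k - 1 + 1 = k := by omega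
      have hrel := rel_dx (K := K) i i
      rw [if_pos rfl] at hrel
      rw [pow_succ', ← mul_assoc, hrel, add_mul, one_mul, mul_assoc, IH, mul_add]
      have hx : xg K n i * ((k : WeylN K n) * xg K n i ^ (k - 1))
          = (k : WeylN K n) * xg K n i ^ k := by
        rw [← mul_assoc, ← (Nat.cast_commute k (xg K n i)).eq, mul_assoc,
          ← pow_succ', hk1]
      rw [hx, ← pow_succ']
      have hcast : ((k + 1 : ℕ) : WeylN K n) = (k : WeylN K n) + 1 := Nat.cast_succ k
      rw [hcast, Nat.add_sub_cancel, ← mul_assoc, ← pow_succ', add_mul, one_mul]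
      abel

lemma xg_dg_pow (i : Fin n) (k : ℕ) :
    xg K n i * dg K n i ^ k
      = dg K n i ^ k * xg K n i - (k : WeylN K n) * dg K n i ^ (k - 1) := by
  have hrel : xg K n i * dg K n i = dg K n i * xg K n i - 1 := by
    have h := rel_dx (K := K) i i
    rw [if_pos rfl] at h
    rw [h, add_sub_cancel_right]
  induction k with
  | zero => simp
  | succ k IH =>
    by_cases hk : k = 0
    · subst hk
      simp [hrel]
    · have hk1 : k - 1 + 1 = k := by omega
      rw [pow_succ', ← mul_assoc, hrel, sub_mul, one_mul, mul_assoc, IH, mul_sub]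
      have hx : dg K n i * ((k : WeylN K n) * dg K n i ^ (k - 1))
          = (k : WeylN K n) * dg K n i ^ k := by
        rw [← mul_assoc, ← (Nat.cast_commute k (dg K n i)).eq, mul_assoc,
          ← pow_succ', hk1]
      rw [hx, ← pow_succ']
      have hcast : ((k + 1 : ℕ) : WeylN K n) = (k : WeylN K n) + 1 := Nat.cast_succ k
      rw [hcast, Nat.add_sub_cancel, ← mul_assoc, ← pow_succ', add_mul, one_mul, sub_sub]

lemma commute_gen_pow {p : ℕ} (hp : p.Prime) [CharP K p] (s t : Fin n ⊕ Fin n) :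
    Commute (gen K n s ^ p) (gen K n t) := by
  haveI : Nontrivial (WeylN K n) := weyl_nontrivial
  haveI hA : CharP (WeylN K n) p := charP_of_injective_algebraMap algebraMap_inj p
  have hcast : ((p : ℕ) : WeylN K n) = 0 := CharP.cast_eq_zero _ p
  rcases s with i | i <;> rcases t with j | j
  · exact Commute.pow_left (rel_xx (K := K) i j) p
  · -- xg i ^ p with dg j
    by_cases hij : i = j
    · subst hij
      have h := dg_xg_pow (K := K) i p
      rw [hcast, zero_mul, add_zero] at h
      exact (Commute.symm h)
    · have hcomm : Commute (dg K n j) (xg K n i) := by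
        have h := rel_dx (K := K) j i
        rw [if_neg hij] at h
        rw [Commute, SemiconjBy, h, add_zero]
      exact ((hcomm.pow_right p).symm)
  · -- dg i ^ p with xg j
    by_cases hij : j = i
    · subst hij
      have h := xg_dg_pow (K := K) j p
      rw [hcast, zero_mul, sub_zero] at h
      exact (Commute.symm h)
    · have hcomm : Commute (dg K n i) (xg K n j) := by
        have h := rel_dx (K := K) i j
        rw [if_neg hij] at h
        rw [Commute, SemiconjBy, h, add_zero]
      exact Commute.pow_left hcomm p
  · exact Commute.pow_left (rel_dd (K := K) i j) p

lemma gen_pow_central {p : ℕ} (hp : p.Prime) [CharP K p] (s : Fin n ⊕ Fin n) :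
    gen K n s ^ p ∈ Subalgebra.center K (WeylN K n) := by
  rw [Subalgebra.mem_center_iff]
  intro b
  have hb : b ∈ (⊤ : Subalgebra K (WeylN K n)) := trivial
  rw [← adjoin_gen_top] at hb
  have hcomm : Commute (gen K n s ^ p) b := by
    refine Algebra.adjoin_induction ?_ ?_ ?_ ?_ hb
    · rintro x ⟨t, rfl⟩
      exact commute_gen_pow hp s t
    · intro r
      exact (Algebra.commutes r (gen K n s ^ p)).symm
    · intro x y _ _ hx hy
      exact hx.add_right hy
    · intro x y _ _ hx hy
      exact hx.mul_right hy
  exact hcomm.symm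

end Weyl17


theorem statement17 (p n : ℕ) (hp : p.Prime) (K : Type*) [Field K] [CharP K p]
    (res : (WeylN K n ≃ₐ[K] WeylN K n) →
      (Subalgebra.center K (WeylN K n) ≃ₐ[K] Subalgebra.center K (WeylN K n)))
    (hres : ∀ (σ : WeylN K n ≃ₐ[K] WeylN K n) (z : Subalgebra.center K (WeylN K n)),
      (↑(res σ z) : WeylN K n) = σ (↑z : WeylN K n)) :
    (∀ σ τ, res (σ * τ) = res σ * res τ) ∧ Function.Injective res := by
  constructor
  · intro σ τ
    apply AlgEquiv.ext
    intro z
    apply Subtype.ext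
    rw [AlgEquiv.mul_apply, hres, hres, AlgEquiv.mul_apply, hres]
  · intro σ τ h
    -- σ and τ agree on the centre
    have hz : ∀ z : Subalgebra.center K (WeylN K n), σ (↑z) = τ (↑z) := by
      intro z
      rw [← hres σ z, ← hres τ z, h]
    -- the automorphism ρ = τ⁻¹ ∘ σ fixes the centre pointwise
    set ρ := σ.trans τ.symm with hρ
    have hρz : ∀ z : Subalgebra.center K (WeylN K n), ρ (↑z) = (↑z : WeylN K n) := by
      intro z
      rw [hρ, AlgEquiv.trans_apply, hz, AlgEquiv.symm_apply_apply]
    -- ρ fixes each generator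
    have hgens : ∀ s, σ (Weyl17.gen K n s) = τ (Weyl17.gen K n s) := by
      intro s
      have hc : Weyl17.gen K n s ^ p ∈ Subalgebra.center K (WeylN K n) :=
        Weyl17.gen_pow_central hp s
      have hfix : ρ (Weyl17.gen K n s ^ p) = Weyl17.gen K n s ^ p :=
        hρz ⟨Weyl17.gen K n s ^ p, hc⟩
      rw [map_pow] at hfix
      have hkey : ρ (Weyl17.gen K n s) = Weyl17.gen K n s :=
        Weyl17.key hp s _ hfix
      have := congrArg τ hkey
      rw [hρ, AlgEquiv.trans_apply, AlgEquiv.apply_symm_apply] at this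
      exact this
    apply AlgEquiv.ext
    intro a
    have ha : a ∈ (⊤ : Subalgebra K (WeylN K n)) := trivial
    rw [← Weyl17.adjoin_gen_top] at ha
    refine Algebra.adjoin_induction ?_ ?_ ?_ ?_ ha
    · rintro x ⟨s, rfl⟩
      exact hgens s
    · intro r
      rw [AlgEquiv.commutes, AlgEquiv.commutes]
    · intro x y _ _ hx hy
      rw [map_add, map_add, hx, hy]
    · intro x y _ _ hx hy
      rw [map_mul, map_mul, hx, hy]
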